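/- Let $(\mathscr{T}, d)$ be a nonempty finite metric space with diameter $\Delta(\mathscr{T}) = \max_{s,t\in\mathscr{T}} d(s,t)$, and let $X:\mathscr{T}\to L^1(\Omega)$ be a stochastic process. Define $\Psi(u) = \max_{s,t\in\mathscr{T}} P\{|X_s - X_t| > d(s,t)u\}$ and $\tau(\lambda) = \int_0^\infty(\lambda\Psi(u)\wedge 1)\,du$. Let $\mathbf{N}_{\mathscr{T}}(r)$ denote the minimal number of open $d$-balls of radius $r$ needed to cover $\mathscr{T}$. Then for every $t_0\in\mathscr{T}$, $E[\max_{t\in\mathscr{T}}|X_t - X_{t_0}|] \le 8\int_0^{\Delta(\mathscr{T})/4} \tau(\mathbf{N}_{\mathscr{T}}(r))\,dr$. -/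

import Mathlib

open MeasureTheory Set ENNReal

/-- The covering number: the minimal number of open balls of radius `r` covering `T`. -/
noncomputable def covN (T : Type*) [MetricSpace T] (r : ℝ) : ℕ :=
  sInf {n : ℕ | ∃ c : Fin n → T, ∀ x : T, ∃ i, dist x (c i) < r}

section Aux

lemma lint_scale (g : ℝ → ℝ≥0∞) (hg : Measurable g) {a : ℝ} (ha : 0 < a) :
    ∫⁻ v in Ioi (0:ℝ), g v = ENNReal.ofReal a * ∫⁻ u in Ioi (0:ℝ), g (a * u) := by
  have hpre : (fun u : ℝ => a * u) ⁻¹' Ioi 0 = Ioi 0 := by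
    ext u
    simp only [mem_preimage, mem_Ioi]
    exact ⟨fun h => by nlinarith, fun h => mul_pos ha h⟩
  have hmap : Measure.map (fun u : ℝ => a * u) (volume.restrict (Ioi (0:ℝ)))
      = ENNReal.ofReal a⁻¹ • volume.restrict (Ioi (0:ℝ)) := by
    conv_lhs => rw [← hpre]
    rw [← Measure.restrict_map (measurable_const_mul a) measurableSet_Ioi,
      Real.map_volume_mul_left ha.ne', abs_of_pos (inv_pos.mpr ha), Measure.restrict_smul]
  have h1 : ∫⁻ u in Ioi (0:ℝ), g (a * u) = ENNReal.ofReal a⁻¹ * ∫⁻ v in Ioi (0:ℝ), g v := by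
    rw [← lintegral_map hg (measurable_const_mul a), hmap, lintegral_smul_measure, smul_eq_mul]
  rw [h1, ← mul_assoc, ← ENNReal.ofReal_mul ha.le, mul_inv_cancel₀ ha.ne', ENNReal.ofReal_one,
    one_mul]

lemma max_ineq {Ω : Type*} [MeasurableSpace Ω] (μ : Measure Ω) [IsProbabilityMeasure μ]
    {n : ℕ} (hn : 0 < n) (Y : Fin n → Ω → ℝ) (hY : ∀ i, Measurable (Y i))
    (Ψ : ℝ → ℝ≥0∞) (hΨ : Antitone Ψ) {a : ℝ} (ha : 0 < a)
    (htail : ∀ i, ∀ u : ℝ, 0 < u → μ {ω | a * u < |Y i ω|} ≤ Ψ u) :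
    ∫⁻ ω, ENNReal.ofReal (⨆ i, |Y i ω|) ∂μ ≤
      ENNReal.ofReal a * ∫⁻ u in Ioi (0:ℝ), min (n * Ψ u) 1 := by
  haveI : Nonempty (Fin n) := Fin.pos_iff_nonempty.mp hn
  have hmeas : Measurable fun ω => ⨆ i, |Y i ω| := by
    have : (fun ω => ⨆ i, |Y i ω|) = Finset.univ.sup' Finset.univ_nonempty
        (fun i ω => |Y i ω|) := by
      ext ω
      rw [← Finset.sup'_univ_eq_ciSup]
      simp [Finset.sup'_apply]
    rw [this]
    exact Finset.measurable_sup' _ (fun i _ => (hY i).abs)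
  have hnn : (0:Ω → ℝ) ≤ᵐ[μ] fun ω => ⨆ i, |Y i ω| := by
    refine Filter.Eventually.of_forall fun ω => ?_
    exact le_ciSup_of_le (Set.Finite.bddAbove (Set.finite_range _)) (Classical.arbitrary _)
      (abs_nonneg _)
  rw [lintegral_eq_lintegral_meas_lt μ hnn hmeas.aemeasurable]
  have hg : Measurable fun v : ℝ => min ((n:ℝ≥0∞) * Ψ (v / a)) 1 := by
    have : Antitone fun v : ℝ => min ((n:ℝ≥0∞) * Ψ (v / a)) 1 := by
      intro x y hxy
      exact min_le_min (mul_le_mul_right (hΨ (by gcongr)) _) le_rfl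
    exact this.measurable
  have step : ∫⁻ v in Ioi (0:ℝ), μ {ω | v < ⨆ i, |Y i ω|}
      ≤ ∫⁻ v in Ioi (0:ℝ), min ((n:ℝ≥0∞) * Ψ (v / a)) 1 := by
    refine setLIntegral_mono hg fun v hv => ?_
    have hv : (0:ℝ) < v := hv
    refine le_min ?_ prob_le_one
    have hsub : {ω | v < ⨆ i, |Y i ω|} ⊆ ⋃ i, {ω | v < |Y i ω|} := by
      intro ω hω
      rw [mem_setOf_eq] at hω
      obtain ⟨i, hi⟩ := (lt_ciSup_iff (Set.Finite.bddAbove (Set.finite_range _))).mp hω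
      exact mem_iUnion.mpr ⟨i, by exact hi⟩
    calc μ {ω | v < ⨆ i, |Y i ω|} ≤ ∑ i, μ {ω | v < |Y i ω|} :=
          (measure_mono hsub).trans (measure_iUnion_fintype_le _ _)
      _ ≤ ∑ _i : Fin n, Ψ (v / a) := by
          refine Finset.sum_le_sum fun i _ => ?_
          have : a * (v / a) = v := by field_simp
          simpa [this] using htail i (v / a) (div_pos hv ha)
      _ = (n:ℝ≥0∞) * Ψ (v / a) := by simp [mul_comm]
  refine step.trans ?_
  rw [lint_scale _ hg ha]
  refine mul_le_mul_right (le_of_eq ?_) _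
  refine setLIntegral_congr_fun measurableSet_Ioi (fun u hu => ?_)
  rw [mul_div_cancel_left₀ _ ha.ne']

variable {T : Type*} [Fintype T] [Nonempty T] [MetricSpace T]

lemma covN_mem {r : ℝ} (hr : 0 < r) :
    ∃ c : Fin (covN T r) → T, ∀ x : T, ∃ i, dist x (c i) < r := by
  have hne : (Fintype.card T) ∈ {n : ℕ | ∃ c : Fin n → T, ∀ x : T, ∃ i, dist x (c i) < r} := by
    refine ⟨(Fintype.equivFin T).symm, fun x => ⟨Fintype.equivFin T x, ?_⟩⟩
    simp [hr]
  exact Nat.sInf_mem ⟨_, hne⟩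

lemma covN_pos {r : ℝ} (hr : 0 < r) : 0 < covN T r := by
  rcases covN_mem (T := T) hr with ⟨c, hc⟩
  rcases hc (Classical.arbitrary T) with ⟨i, _⟩
  exact i.pos

lemma covN_anti {r r' : ℝ} (hr : 0 < r) (h : r ≤ r') : covN T r' ≤ covN T r := by
  obtain ⟨c, hc⟩ := covN_mem (T := T) hr
  exact Nat.sInf_le ⟨c, fun x => (hc x).imp fun i hi => hi.trans_le h⟩

end Aux
theorem entropy_chaining_bound {T : Type*} [Fintype T] [Nonempty T] [MetricSpace T]
    {Ω : Type*} [MeasurableSpace Ω] (μ : Measure Ω) [IsProbabilityMeasure μ]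
    (X : T → Ω → ℝ) (hX : ∀ t, Measurable (X t)) (t₀ : T) :
    (∫⁻ ω, ENNReal.ofReal (⨆ t : T, |X t ω - X t₀ ω|) ∂μ)
      ≤ 8 * ∫⁻ r in Set.Ioo (0 : ℝ) (Metric.diam (Set.univ : Set T) / 4),
            ∫⁻ u in Set.Ioi (0 : ℝ),
              ENNReal.ofReal (min ((covN T r : ℝ) *
                (⨆ p : T × T, (μ {ω | dist p.1 p.2 * u < |X p.1 ω - X p.2 ω|}).toReal)) 1) := by
  classical
  set Δ := Metric.diam (Set.univ : Set T) with hΔdef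
  set G : ℝ → ℝ≥0∞ := fun r' => ∫⁻ u in Set.Ioi (0:ℝ),
      ENNReal.ofReal (min ((covN T r' : ℝ) *
        (⨆ p : T × T, (μ {ω | dist p.1 p.2 * u < |X p.1 ω - X p.2 ω|}).toReal)) 1) with hG
  rcases le_or_gt Δ 0 with hΔ | hΔ
  · have hsub : ∀ t : T, t = t₀ := fun t => by
      have hb : Bornology.IsBounded (univ : Set T) := Set.finite_univ.isBounded
      have h1 := Metric.dist_le_diam_of_mem hb (mem_univ t) (mem_univ t₀)
      exact dist_le_zero.mp (h1.trans hΔ)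
    have hz : ∀ ω, (⨆ t : T, |X t ω - X t₀ ω|) = 0 := by
      intro ω
      have h1 : ∀ t : T, |X t ω - X t₀ ω| = 0 := fun t => by rw [hsub t]; simp
      calc (⨆ t : T, |X t ω - X t₀ ω|) = ⨆ _t : T, (0:ℝ) := iSup_congr h1
        _ = 0 := ciSup_const
    calc ∫⁻ ω, ENNReal.ofReal (⨆ t : T, |X t ω - X t₀ ω|) ∂μ = 0 := by
          simp [hz]
      _ ≤ _ := zero_le
  -- main case
  set ρ : ℕ → ℝ := fun k => Δ / 2 ^ (k + 1) with hρ
  have hρpos : ∀ k, 0 < ρ k := fun k => div_pos hΔ (by positivity)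
  have hρanti : ∀ j k, j ≤ k → ρ k ≤ ρ j := by
    intro j k hjk
    apply div_le_div_of_nonneg_left hΔ.le (by positivity)
    exact pow_le_pow_right₀ one_le_two (by omega)
  have hρhalf : ∀ k, ρ (k + 1) = ρ k / 2 := by
    intro k
    simp only [hρ]
    rw [pow_succ]
    ring
  have hρ1 : ρ 1 = Δ / 4 := by norm_num [hρ]
  set ΨE : ℝ → ℝ≥0∞ := fun u => ⨆ p : T × T,
      μ {ω | dist p.1 p.2 * u < |X p.1 ω - X p.2 ω|} with hΨE
  have hΨanti : Antitone ΨE := by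
    intro u u' huu'
    refine iSup_mono fun p => measure_mono fun ω hω => ?_
    rw [mem_setOf_eq] at hω ⊢
    exact lt_of_le_of_lt (mul_le_mul_of_nonneg_left huu' dist_nonneg) hω
  have hΨtail : ∀ (s s' : T) (u : ℝ),
      μ {ω | dist s s' * u < |X s ω - X s' ω|} ≤ ΨE u := fun s s' u =>
    le_iSup (fun p : T × T => μ {ω | dist p.1 p.2 * u < |X p.1 ω - X p.2 ω|}) (s, s')
  have hΨle1 : ∀ u, ΨE u ≤ 1 := fun u => iSup_le fun p => prob_le_one
  set τ : ℕ → ℝ≥0∞ := fun m => ∫⁻ u in Set.Ioi (0:ℝ), min ((m : ℝ≥0∞) * ΨE u) 1 with hτ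
  have hτmono : Monotone τ := by
    intro m m' hm
    exact lintegral_mono fun u =>
      min_le_min (mul_le_mul_left (by exact_mod_cast Nat.cast_le.mpr hm) _) le_rfl
  have hconv : ∀ (m : ℕ) (u : ℝ),
      ENNReal.ofReal (min ((m : ℝ) *
        (⨆ p : T × T, (μ {ω | dist p.1 p.2 * u < |X p.1 ω - X p.2 ω|}).toReal)) 1)
      = min ((m : ℝ≥0∞) * ΨE u) 1 := by
    intro m u
    have h0 : (⨆ p : T × T, (μ {ω | dist p.1 p.2 * u < |X p.1 ω - X p.2 ω|}).toReal)
        = (ΨE u).toReal := by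
      rw [hΨE]
      exact (ENNReal.toReal_iSup (fun p => measure_ne_top μ _)).symm
    have hΨfin : ΨE u ≠ ⊤ := ((hΨle1 u).trans_lt ENNReal.one_lt_top).ne
    have hfin : (m : ℝ≥0∞) * ΨE u ≠ ⊤ := ENNReal.mul_ne_top (ENNReal.natCast_ne_top m) hΨfin
    have h1 : (m : ℝ) * (ΨE u).toReal = ((m : ℝ≥0∞) * ΨE u).toReal := by
      rw [ENNReal.toReal_mul, ENNReal.toReal_natCast]
    rw [h0, h1, show (1:ℝ) = (1:ℝ≥0∞).toReal from ENNReal.toReal_one.symm,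
      ← ENNReal.toReal_min hfin ENNReal.one_ne_top,
      ENNReal.ofReal_toReal (by exact ne_top_of_le_ne_top ENNReal.one_ne_top (min_le_right _ _))]
  have hGτ : ∀ r', G r' = τ (covN T r') := fun r' => lintegral_congr fun u => hconv _ u
  -- nets
  have hcov := fun k => covN_mem (T := T) (hρpos k)
  choose c hc using hcov
  choose π hπ using fun k (x : T) => hc k x
  set P : ℕ → T → T := fun k x => if k = 0 then t₀ else c k (π k x) with hP
  have hP0 : ∀ x, P 0 x = t₀ := fun x => by simp [hP]
  have hPdist : ∀ k x, k ≠ 0 → dist x (P k x) < ρ k := by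
    intro k x hk
    simp only [hP, if_neg hk]
    exact hπ k x
  -- minimal positive distance
  set Fd : Finset ℝ :=
    (Finset.univ.image (fun p : T × T => dist p.1 p.2)).filter (fun d => 0 < d) with hFd
  set δ : ℝ := if h : Fd.Nonempty then Fd.min' h else 1 with hδ
  have hFdpos : ∀ d ∈ Fd, 0 < d := by
    intro d hd
    rw [hFd] at hd
    exact (Finset.mem_filter.mp hd).2
  have hδpos : 0 < δ := by
    rw [hδ]
    split_ifs with h
    exacts [hFdpos _ (Fd.min'_mem h), one_pos]
  have hδeq : ∀ x y : T, dist x y < δ → x = y := by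
    intro x y hxy
    by_contra hne
    have hd0 : 0 < dist x y := dist_pos.mpr hne
    have hmem : dist x y ∈ Fd := by
      rw [hFd]
      refine Finset.mem_filter.mpr ⟨Finset.mem_image.mpr ⟨(x, y), Finset.mem_univ _, rfl⟩, hd0⟩
    have hFne : Fd.Nonempty := ⟨_, hmem⟩
    have hle : δ ≤ dist x y := by
      rw [hδ, dif_pos hFne]
      exact Fd.min'_le _ hmem
    linarith
  obtain ⟨K', hK'⟩ : ∃ k : ℕ, Δ / δ < 2 ^ k := pow_unbounded_of_one_lt _ one_lt_two
  have hρK' : ρ K' < δ := by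
    have h3 : Δ < 2 ^ K' * δ := (div_lt_iff₀ hδpos).mp hK'
    simp only [hρ]
    rw [div_lt_iff₀ (by positivity : (0:ℝ) < 2 ^ (K' + 1))]
    have h4 : (0:ℝ) < 2 ^ K' := by positivity
    calc Δ < 2 ^ K' * δ := h3
      _ ≤ δ * 2 ^ (K' + 1) := by rw [pow_succ]; nlinarith
  set K := K' + 2 with hK
  have hfix : ∀ x : T, P (K' + 1) x = x := by
    intro x
    have h1 : dist x (P (K' + 1) x) < ρ (K' + 1) := hPdist _ x (Nat.succ_ne_zero _)
    have h2 : ρ (K' + 1) ≤ ρ K' := hρanti _ _ (Nat.le_succ _)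
    exact (hδeq x (P (K' + 1) x) (by linarith)).symm
  have hnpos : ∀ k, 0 < covN T (ρ k) := fun k => covN_pos (hρpos k)
  haveI hFinNe : ∀ k, Nonempty (Fin (covN T (ρ k))) := fun k => Fin.pos_iff_nonempty.mp (hnpos k)
  set M : ℕ → Ω → ℝ := fun k ω => ⨆ i : Fin (covN T (ρ (k + 1))),
      |X (c (k + 1) i) ω - X (P k (c (k + 1) i)) ω| with hM
  have hMnonneg : ∀ k ω, 0 ≤ M k ω := by
    intro k ω
    exact le_ciSup_of_le (Set.Finite.bddAbove (Set.finite_range _)) (Classical.arbitrary _)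
      (abs_nonneg _)
  have hMmeas : ∀ k, Measurable (M k) := by
    intro k
    have heq : M k = Finset.univ.sup' Finset.univ_nonempty
        (fun (i : Fin (covN T (ρ (k + 1)))) ω => |X (c (k + 1) i) ω - X (P k (c (k + 1) i)) ω|) := by
      ext ω
      simp only [hM]
      rw [← Finset.sup'_univ_eq_ciSup]
      simp [Finset.sup'_apply]
    rw [heq]
    exact Finset.measurable_sup' _ fun i _ => ((hX _).sub (hX _)).abs
  -- pointwise chaining bound
  have hpt : ∀ ω, (⨆ t : T, |X t ω - X t₀ ω|) ≤ ∑ k ∈ Finset.range K, M k ω := by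
    intro ω
    refine ciSup_le fun t => ?_
    have haux : ∀ k (s : T), (∃ i, c (k + 1) i = s) → |X s ω - X (P k s) ω| ≤ M k ω := by
      rintro k s ⟨i, rfl⟩
      simp only [hM]
      exact le_ciSup (Set.Finite.bddAbove (Set.finite_range _))
        (f := fun i => |X (c (k + 1) i) ω - X (P k (c (k + 1) i)) ω|) i
    let σ : ℕ → T := fun j => Nat.rec t (fun j s => P (K - 1 - j) s) j
    have hσ0 : σ 0 = t := rfl
    have hσsucc : ∀ j, σ (j + 1) = P (K - 1 - j) (σ j) := fun j => rfl
    have hσK : σ K = t₀ := by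
      have e : K' + 2 = (K' + 1) + 1 := rfl
      rw [hK, e, hσsucc (K' + 1), show K - 1 - (K' + 1) = 0 by omega, hP0]
    have htel : X t ω - X t₀ ω = ∑ j ∈ Finset.range K, (X (σ j) ω - X (σ (j + 1)) ω) := by
      rw [Finset.sum_range_sub' (f := fun j => X (σ j) ω), hσ0, hσK]
    have hterm : ∀ j ∈ Finset.range K, |X (σ j) ω - X (σ (j + 1)) ω| ≤ M (K - 1 - j) ω := by
      intro j hj
      rw [Finset.mem_range] at hj
      rcases Nat.eq_zero_or_pos j with rfl | hj1
      · have hσ1 : σ (0 + 1) = t := by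
          rw [hσsucc 0, show K - 1 - 0 = K' + 1 by omega, hσ0, hfix t]
        rw [hσ0, hσ1, sub_self, abs_zero]
        exact hMnonneg _ ω
      · obtain ⟨j', rfl⟩ : ∃ j', j = j' + 1 := ⟨j - 1, by omega⟩
        have hk1 : K - 1 - j' ≠ 0 := by omega
        have hform : σ (j' + 1) = c (K - 1 - j') (π (K - 1 - j') (σ j')) := by
          rw [hσsucc j']
          simp only [hP, if_neg hk1]
        have hkk : (K - 1 - (j' + 1)) + 1 = K - 1 - j' := by omega
        rw [hσsucc (j' + 1)]
        apply haux
        rw [hkk]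
        exact ⟨π (K - 1 - j') (σ j'), hform.symm⟩
    calc |X t ω - X t₀ ω|
        = |∑ j ∈ Finset.range K, (X (σ j) ω - X (σ (j + 1)) ω)| := by rw [← htel]
      _ ≤ ∑ j ∈ Finset.range K, |X (σ j) ω - X (σ (j + 1)) ω| :=
          Finset.abs_sum_le_sum_abs _ _
      _ ≤ ∑ j ∈ Finset.range K, M (K - 1 - j) ω := Finset.sum_le_sum hterm
      _ = ∑ k ∈ Finset.range K, M k ω := Finset.sum_range_reflect (fun k => M k ω) K
  -- per-level integral bound
  have hMk : ∀ k, ∫⁻ ω, ENNReal.ofReal (M k ω) ∂μ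
      ≤ ENNReal.ofReal (4 * ρ (k + 1)) * τ (covN T (ρ (k + 1))) := by
    intro k
    have hdist : ∀ i : Fin (covN T (ρ (k + 1))),
        dist (c (k + 1) i) (P k (c (k + 1) i)) ≤ 4 * ρ (k + 1) := by
      intro i
      rcases Nat.eq_zero_or_pos k with rfl | hk
      · have hb : Bornology.IsBounded (univ : Set T) := Set.finite_univ.isBounded
        have h1 : dist (c 1 i) t₀ ≤ Δ := Metric.dist_le_diam_of_mem hb (mem_univ _) (mem_univ _)
        rw [hP0]
        have h2 : 4 * ρ 1 = Δ := by rw [hρ1]; ring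
        linarith
      · have h1 : dist (c (k + 1) i) (P k (c (k + 1) i)) < ρ k := hPdist k _ (by omega)
        have h2 : ρ (k + 1) = ρ k / 2 := hρhalf k
        nlinarith [hρpos (k + 1), hρpos k]
    have h4ρ : (0:ℝ) < 4 * ρ (k + 1) := by have := hρpos (k + 1); linarith
    have := max_ineq μ (hnpos (k + 1))
      (fun i ω => X (c (k + 1) i) ω - X (P k (c (k + 1) i)) ω)
      (fun i => (hX _).sub (hX _)) ΨE hΨanti h4ρ ?_
    · exact this
    · intro i u hu
      refine le_trans (measure_mono fun ω hω => ?_) (hΨtail (c (k + 1) i) (P k (c (k + 1) i)) u)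
      rw [mem_setOf_eq] at hω ⊢
      exact lt_of_le_of_lt (mul_le_mul_of_nonneg_right (hdist i) hu.le) hω
  -- combine left side
  have hL : ∫⁻ ω, ENNReal.ofReal (⨆ t : T, |X t ω - X t₀ ω|) ∂μ
      ≤ ∑ k ∈ Finset.range K, ENNReal.ofReal (4 * ρ (k + 1)) * τ (covN T (ρ (k + 1))) := by
    calc ∫⁻ ω, ENNReal.ofReal (⨆ t : T, |X t ω - X t₀ ω|) ∂μ
        ≤ ∫⁻ ω, ∑ k ∈ Finset.range K, ENNReal.ofReal (M k ω) ∂μ := by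
          refine lintegral_mono fun ω => ?_
          rw [← ENNReal.ofReal_sum_of_nonneg (fun k _ => hMnonneg k ω)]
          exact ENNReal.ofReal_le_ofReal (hpt ω)
      _ = ∑ k ∈ Finset.range K, ∫⁻ ω, ENNReal.ofReal (M k ω) ∂μ :=
          lintegral_finset_sum _ fun k _ => (hMmeas k).ennreal_ofReal
      _ ≤ _ := Finset.sum_le_sum fun k _ => hMk k
  refine hL.trans ?_
  -- compare with the entropy integral
  have hI : ∀ k : ℕ, Ico (ρ (k + 2)) (ρ (k + 1)) ⊆ Ioo (0:ℝ) (Δ / 4) := by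
    intro k x hx
    refine ⟨lt_of_lt_of_le (hρpos (k + 2)) hx.1, lt_of_lt_of_le hx.2 ?_⟩
    rw [← hρ1]
    exact hρanti 1 (k + 1) (by omega)
  have hdisj : (↑(Finset.range K) : Set ℕ).PairwiseDisjoint
      (fun k => Ico (ρ (k + 2)) (ρ (k + 1))) := by
    intro a _ b _ hab
    have key : ∀ a b : ℕ, a < b →
        Disjoint (Ico (ρ (a + 2)) (ρ (a + 1))) (Ico (ρ (b + 2)) (ρ (b + 1))) := by
      intro a b h
      refine Set.disjoint_left.mpr fun x hxa hxb => ?_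
      have h1 : ρ (b + 1) ≤ ρ (a + 2) := hρanti (a + 2) (b + 1) (by omega)
      have := hxa.1
      have := hxb.2
      linarith
    rcases lt_or_gt_of_ne hab with h | h
    · exact key a b h
    · exact (key b a h).symm
  have hstep1 : ∀ k : ℕ, ENNReal.ofReal (ρ (k + 2)) * τ (covN T (ρ (k + 1)))
      ≤ ∫⁻ r' in Ico (ρ (k + 2)) (ρ (k + 1)), G r' := by
    intro k
    have hvol : volume (Ico (ρ (k + 2)) (ρ (k + 1))) = ENNReal.ofReal (ρ (k + 2)) := by
      rw [Real.volume_Ico]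
      congr 1
      rw [hρhalf (k + 1)]
      ring
    calc ENNReal.ofReal (ρ (k + 2)) * τ (covN T (ρ (k + 1)))
        = ∫⁻ _r' in Ico (ρ (k + 2)) (ρ (k + 1)), τ (covN T (ρ (k + 1))) := by
          rw [setLIntegral_const, hvol, mul_comm]
      _ ≤ ∫⁻ r' in Ico (ρ (k + 2)) (ρ (k + 1)), G r' := by
          refine setLIntegral_mono' measurableSet_Ico fun r' hr' => ?_
          rw [hGτ r']
          exact hτmono (covN_anti (lt_of_lt_of_le (hρpos (k + 2)) hr'.1) hr'.2.le)
  calc ∑ k ∈ Finset.range K, ENNReal.ofReal (4 * ρ (k + 1)) * τ (covN T (ρ (k + 1)))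
      = ∑ k ∈ Finset.range K, 8 * (ENNReal.ofReal (ρ (k + 2)) * τ (covN T (ρ (k + 1)))) := by
        refine Finset.sum_congr rfl fun k _ => ?_
        rw [← mul_assoc]
        congr 1
        rw [show (8 : ℝ≥0∞) = ENNReal.ofReal 8 by norm_num,
          ← ENNReal.ofReal_mul (by norm_num : (0:ℝ) ≤ 8)]
        congr 1
        rw [hρhalf (k + 1)]
        ring
    _ = 8 * ∑ k ∈ Finset.range K, ENNReal.ofReal (ρ (k + 2)) * τ (covN T (ρ (k + 1))) := by
        rw [Finset.mul_sum]
    _ ≤ 8 * ∫⁻ r' in Ioo (0:ℝ) (Δ / 4), G r' := by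
        refine mul_le_mul_right ?_ 8
        calc ∑ k ∈ Finset.range K, ENNReal.ofReal (ρ (k + 2)) * τ (covN T (ρ (k + 1)))
            ≤ ∑ k ∈ Finset.range K, ∫⁻ r' in Ico (ρ (k + 2)) (ρ (k + 1)), G r' :=
              Finset.sum_le_sum fun k _ => hstep1 k
          _ = ∫⁻ r' in ⋃ k ∈ Finset.range K, Ico (ρ (k + 2)) (ρ (k + 1)), G r' :=
              (lintegral_biUnion_finset hdisj (fun k _ => measurableSet_Ico) _).symm
          _ ≤ ∫⁻ r' in Ioo (0:ℝ) (Δ / 4), G r' :=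
              lintegral_mono_set (iUnion₂_subset fun k _ => hI k)
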